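/- Let W_{n,k} be the set of words of length n over the alphabet {1,...,k}, let the cyclic group C_n act on W_{n,k} by cyclic rotation, and let f_n(q) = Σ_{w ∈ W_{n,k}} q^{maj(w)}. Then (W_{n,k}, C_n, f_n(q)) exhibits the cyclic sieving phenomenon: for every d, the number of words fixed by d-fold rotation equals f_n(ξ^d) where ξ = e^{2πi/n}. -/

import Mathlib

/-- The major index of a word `w = w₁ … w_n` (here `w : Fin n → Fin k`):
`maj(w) = Σ_{i : w_i > w_{i+1}} i` (positions `1`-indexed). -/
def majW (n k : ℕ) (w : Fin n → Fin k) : ℕ :=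
  ∑ i ∈ Finset.range n,
    if h : i + 1 < n then
      (if w ⟨i + 1, h⟩ < w ⟨i, by omega⟩ then i + 1 else 0)
    else 0

def mterm (n k : ℕ) (w : Fin n → Fin k) (i : ℕ) : ℕ :=
  if h : i + 1 < n then
    (if w ⟨i + 1, h⟩ < w ⟨i, by omega⟩ then i + 1 else 0)
  else 0

lemma majW_eq (n k : ℕ) (w : Fin n → Fin k) : majW n k w = ∑ i ∈ Finset.range n, mterm n k w i := rfl

def cterm (m k : ℕ) (v : Fin m → Fin k) (i : ℕ) : ℕ :=
  if h : i < m then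
    (if v ⟨(i + 1) % m, Nat.mod_lt _ (by omega)⟩ < v ⟨i, h⟩ then 1 else 0)
  else 0

def cdesW (m k : ℕ) (v : Fin m → Fin k) : ℕ := ∑ i ∈ Finset.range m, cterm m k v i

def rotW (m k : ℕ) (v : Fin m → Fin k) : Fin m → Fin k :=
  fun i => v ⟨((i : ℕ) + 1) % m, Nat.mod_lt _ i.pos⟩

lemma mterm_of_lt {n k : ℕ} (w : Fin n → Fin k) {i : ℕ} (h : i + 1 < n) :
    mterm n k w i = if w ⟨i + 1, h⟩ < w ⟨i, by omega⟩ then i + 1 else 0 := dif_pos h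

lemma mterm_of_ge {n k : ℕ} (w : Fin n → Fin k) {i : ℕ} (h : ¬ i + 1 < n) :
    mterm n k w i = 0 := dif_neg h

lemma cterm_of_lt {m k : ℕ} (v : Fin m → Fin k) {i : ℕ} (h : i + 1 < m) :
    cterm m k v i = if v ⟨i + 1, h⟩ < v ⟨i, by omega⟩ then 1 else 0 := by
  rw [cterm, dif_pos (show i < m by omega)]
  simp only [Nat.mod_eq_of_lt h]

lemma cterm_last {m k : ℕ} (v : Fin m → Fin k) (hm : 0 < m) :
    cterm m k v (m - 1) = if v ⟨0, hm⟩ < v ⟨m - 1, by omega⟩ then 1 else 0 := by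
  rw [cterm, dif_pos (show m - 1 < m by omega)]
  simp only [show m - 1 + 1 = m from by omega, Nat.mod_self]

lemma cterm_of_ge {m k : ℕ} (v : Fin m → Fin k) {i : ℕ} (h : ¬ i < m) :
    cterm m k v i = 0 := dif_neg h

lemma cterm_le_one (m k : ℕ) (v : Fin m → Fin k) (i : ℕ) : cterm m k v i ≤ 1 := by
  unfold cterm; split <;> [skip; omega]; split <;> omega

lemma mterm_eq_cterm {m k : ℕ} (v : Fin m → Fin k) {i : ℕ} (h : i + 1 < m) :
    mterm m k v i = (i + 1) * cterm m k v i := by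
  rw [mterm_of_lt v h, cterm_of_lt v h]
  split <;> simp

lemma L1 (m k : ℕ) (hm : 0 < m) (v : Fin m → Fin k) :
    majW m k v + m * cterm m k v (m - 1) = ∑ i ∈ Finset.range m, (i + 1) * cterm m k v i := by
  obtain ⟨m', rfl⟩ : ∃ m', m = m' + 1 := ⟨m - 1, by omega⟩
  rw [majW_eq, Finset.sum_range_succ, Finset.sum_range_succ,
    mterm_of_ge v (by omega), add_zero]
  have h2 : m' + 1 - 1 = m' := by omega
  rw [h2, Finset.sum_congr rfl (fun i hi => mterm_eq_cterm v (by
    simp only [Finset.mem_range] at hi; omega))]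

lemma L2 (m k : ℕ) (hm : 0 < m) (v : Fin m → Fin k) :
    majW m k (rotW m k v) = ∑ i ∈ Finset.range m, i * cterm m k v i := by
  rw [majW_eq]
  apply Finset.sum_nbij' (i := fun i => (i + 1) % m) (j := fun i => (i + (m - 1)) % m)
  · intro a ha; exact Finset.mem_range.2 (Nat.mod_lt _ hm)
  · intro a ha; exact Finset.mem_range.2 (Nat.mod_lt _ hm)
  · intro a ha
    simp only [Finset.mem_range] at ha
    rw [Nat.mod_add_mod]
    have : a + 1 + (m - 1) = a + m := by omega
    rw [this, Nat.add_mod_right, Nat.mod_eq_of_lt ha]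
  · intro a ha
    simp only [Finset.mem_range] at ha
    rw [Nat.mod_add_mod]
    have : a + (m - 1) + 1 = a + m := by omega
    rw [this, Nat.add_mod_right, Nat.mod_eq_of_lt ha]
  · intro a ha
    simp only [Finset.mem_range] at ha
    by_cases h : a + 1 < m
    · rw [mterm_of_lt _ h, Nat.mod_eq_of_lt h, cterm, dif_pos h]
      simp only [rotW, Nat.mod_eq_of_lt h]
      split <;> simp
    · -- a = m - 1 : mterm = 0, and target index is 0, giving 0 * _ = 0
      rw [mterm_of_ge _ h]
      have : (a + 1) % m = 0 := by
        have : a + 1 = m := by omega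
        rw [this, Nat.mod_self]
      rw [this, zero_mul]

lemma cdes_rot (m k : ℕ) (hm : 0 < m) (v : Fin m → Fin k) :
    cdesW m k (rotW m k v) = cdesW m k v := by
  rw [cdesW, cdesW]
  apply Finset.sum_nbij' (i := fun i => (i + 1) % m) (j := fun i => (i + (m - 1)) % m)
  · intro a ha; exact Finset.mem_range.2 (Nat.mod_lt _ hm)
  · intro a ha; exact Finset.mem_range.2 (Nat.mod_lt _ hm)
  · intro a ha
    simp only [Finset.mem_range] at ha
    rw [Nat.mod_add_mod]
    have : a + 1 + (m - 1) = a + m := by omega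
    rw [this, Nat.add_mod_right, Nat.mod_eq_of_lt ha]
  · intro a ha
    simp only [Finset.mem_range] at ha
    rw [Nat.mod_add_mod]
    have : a + (m - 1) + 1 = a + m := by omega
    rw [this, Nat.add_mod_right, Nat.mod_eq_of_lt ha]
  · intro a ha
    simp only [Finset.mem_range] at ha
    rw [cterm, dif_pos ha, cterm, dif_pos (Nat.mod_lt _ hm)]
    simp only [rotW, Nat.mod_add_mod]

lemma key_identity (m k : ℕ) (hm : 0 < m) (v : Fin m → Fin k) :
    majW m k (rotW m k v) + cdesW m k v = majW m k v + m * cterm m k v (m - 1) := by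
  rw [L2 m k hm v, cdesW, L1 m k hm v, ← Finset.sum_add_distrib]
  apply Finset.sum_congr rfl
  intro i _; ring

lemma rot_inv (m k : ℕ) (hm : 0 < m) (v : Fin m → Fin k) :
    rotW m k (fun i : Fin m => v ⟨((i : ℕ) + (m - 1)) % m, Nat.mod_lt _ hm⟩) = v ∧
    (fun i : Fin m => rotW m k v ⟨((i : ℕ) + (m - 1)) % m, Nat.mod_lt _ hm⟩) = v := by
  constructor
  · funext i
    simp only [rotW, Nat.mod_add_mod]
    congr 1
    apply Fin.ext
    simp only []
    have h2 : (i : ℕ) + 1 + (m-1) = (i : ℕ) + m := by omega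
    rw [h2, Nat.add_mod_right, Nat.mod_eq_of_lt i.isLt]
  · funext i
    simp only [rotW, Nat.mod_add_mod]
    congr 1
    apply Fin.ext
    simp only []
    have h2 : (i : ℕ) + (m-1) + 1 = (i : ℕ) + m := by omega
    rw [h2, Nat.add_mod_right, Nat.mod_eq_of_lt i.isLt]

lemma rot_bij (m k : ℕ) (hm : 0 < m) : Function.Bijective (rotW m k) := by
  apply Function.bijective_iff_has_inverse.2
  refine ⟨fun v i => v ⟨((i : ℕ) + (m - 1)) % m, Nat.mod_lt _ hm⟩, ?_, ?_⟩
  · intro v; exact (rot_inv m k hm v).2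
  · intro v; exact (rot_inv m k hm v).1

lemma const_of_cdes_zero (m k : ℕ) (hm : 0 < m) (v : Fin m → Fin k)
    (h : cdesW m k v = 0) : ∀ i : Fin m, v i = v ⟨0, hm⟩ := by
  have hterm : ∀ i ∈ Finset.range m, cterm m k v i = 0 :=
    (Finset.sum_eq_zero_iff).1 h
  have step : ∀ i : ℕ, (h1 : i + 1 < m) → v ⟨i, by omega⟩ ≤ v ⟨i + 1, h1⟩ := by
    intro i h1
    have := hterm i (Finset.mem_range.2 (by omega))
    rw [cterm_of_lt v h1] at this
    split at this
    · omega
    · omega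
  have chain : ∀ j : ℕ, ∀ hj : j < m, ∀ i : ℕ, ∀ _hij : i ≤ j, v ⟨i, by omega⟩ ≤ v ⟨j, hj⟩ := by
    intro j
    induction j with
    | zero => intro hj i hij; have : i = 0 := by omega
              subst this; exact le_refl _
    | succ j ih =>
        intro hj i hij
        rcases Nat.lt_or_ge i (j+1) with h1 | h1
        · exact le_trans (ih (by omega) i (by omega)) (step j hj)
        · have : i = j + 1 := by omega
          subst this; exact le_refl _
  have last : v ⟨m - 1, by omega⟩ ≤ v ⟨0, hm⟩ := by
    have := hterm (m-1) (Finset.mem_range.2 (by omega))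
    rw [cterm_last v hm] at this
    split at this
    · omega
    · omega
  intro i
  apply le_antisymm
  · exact le_trans (chain (m-1) (by omega) i (by omega)) last
  · exact chain i i.isLt 0 (by omega)

lemma cdes_lt (m k : ℕ) (hm : 0 < m) (v : Fin m → Fin k) : cdesW m k v < m := by
  -- find an index with cterm = 0 : position just before a maximum of v
  obtain ⟨j, _, hj⟩ := Finset.exists_max_image Finset.univ v ⟨⟨0, hm⟩, Finset.mem_univ _⟩
  have ⟨i0, hi0m, hi0⟩ : ∃ i0, i0 < m ∧ cterm m k v i0 = 0 := by
    rcases Nat.eq_zero_or_pos (j : ℕ) with hj0 | hj0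
    · refine ⟨m - 1, by omega, ?_⟩
      rw [cterm_last v hm]
      have h0 : (⟨0, hm⟩ : Fin m) = j := Fin.ext (by simp [hj0])
      rw [if_neg]
      rw [h0]
      exact not_lt.2 (hj ⟨m-1, by omega⟩ (Finset.mem_univ _))
    · refine ⟨(j : ℕ) - 1, by omega, ?_⟩
      rw [cterm_of_lt v (show (j:ℕ) - 1 + 1 < m by omega)]
      rw [if_neg]
      have : (⟨(j:ℕ) - 1 + 1, by omega⟩ : Fin m) = j := Fin.ext (by simp; omega)
      rw [this]
      exact not_lt.2 (hj ⟨(j:ℕ)-1, by omega⟩ (Finset.mem_univ _))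
  calc cdesW m k v < ∑ i ∈ Finset.range m, 1 := by
        apply Finset.sum_lt_sum
        · intro i _; exact cterm_le_one m k v i
        · exact ⟨i0, Finset.mem_range.2 hi0m, by omega⟩
    _ = m := by simp

lemma maj_const (m k : ℕ) (hm : 0 < m) (v : Fin m → Fin k)
    (h : ∀ i : Fin m, v i = v ⟨0, hm⟩) : majW m k v = 0 := by
  rw [majW_eq]
  apply Finset.sum_eq_zero
  intro i hi
  by_cases h1 : i + 1 < m
  · rw [mterm_of_lt v h1, if_neg]
    rw [h ⟨i+1, h1⟩, h ⟨i, by omega⟩]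
    exact lt_irrefl _
  · exact mterm_of_ge v h1

lemma zeta_pow_eq (ζ : ℂ) (m : ℕ) (hζ : ζ ^ m = 1) (a b : ℕ) (h : a % m = b % m) :
    ζ ^ a = ζ ^ b := by
  rw [← Nat.div_add_mod a m, ← Nat.div_add_mod b m, pow_add, pow_add,
    pow_mul, pow_mul, hζ, one_pow, one_pow, h]

lemma partC (m k : ℕ) (hm : 0 < m) (ζ : ℂ) (hζm : ζ ^ m = 1)
    (hprim : ∀ c : ℕ, 0 < c → c < m → ζ ^ c ≠ 1) :
    ∑ v : Fin m → Fin k, ζ ^ (majW m k v) = k := by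
  classical
  have hmaps : ∀ v ∈ (Finset.univ : Finset (Fin m → Fin k)),
      cdesW m k v ∈ Finset.range m :=
    fun v _ => Finset.mem_range.2 (cdes_lt m k hm v)
  rw [← Finset.sum_fiberwise_of_maps_to hmaps (fun v => ζ ^ (majW m k v))]
  have hfib : ∀ c ∈ Finset.range m, c ≠ 0 →
      (∑ v ∈ Finset.univ.filter (fun v => cdesW m k v = c), ζ ^ (majW m k v)) = 0 := by
    intro c _ hc0
    set S := ∑ v ∈ Finset.univ.filter (fun v => cdesW m k v = c), ζ ^ (majW m k v) with hS
    -- S = ζ^c * S via the rotation bijection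
    have hrot : S = ζ ^ c * S := by
      have hre : S = ∑ v ∈ Finset.univ.filter (fun v => cdesW m k v = c),
          ζ ^ (majW m k (rotW m k v)) := by
        rw [hS]
        apply Finset.sum_nbij'
          (i := fun v (i : Fin m) => v ⟨((i : ℕ) + (m - 1)) % m, Nat.mod_lt _ hm⟩)
          (j := fun v => rotW m k v)
        · intro v hv
          simp only [Finset.mem_filter, Finset.mem_univ, true_and] at hv ⊢
          rw [← cdes_rot m k hm, (rot_inv m k hm v).1]; exact hv
        · intro v hv
          simp only [Finset.mem_filter, Finset.mem_univ, true_and] at hv ⊢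
          rw [cdes_rot m k hm v]; exact hv
        · intro v _; exact (rot_inv m k hm v).1
        · intro v _; exact (rot_inv m k hm v).2
        · intro v hv
          congr 1
          exact congrArg (majW m k) (rot_inv m k hm v).1.symm
      -- now use the key identity termwise
      conv_lhs => rw [hS]
      rw [hre, Finset.mul_sum]
      apply Finset.sum_congr rfl
      intro v hv
      simp only [Finset.mem_filter, Finset.mem_univ, true_and] at hv
      have hid := key_identity m k hm v
      rw [hv] at hid
      have : ζ ^ (majW m k (rotW m k v) + c) = ζ ^ (majW m k v + m * cterm m k v (m-1)) := by
        rw [hid]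
      rw [pow_add, pow_add, pow_mul, hζm, one_pow, mul_one] at this
      rw [← this]; ring
    by_cases hfe : (Finset.univ.filter (fun v => cdesW m k v = c)).Nonempty
    · have hne : ζ ^ c ≠ 1 := by
        obtain ⟨v, hv⟩ := hfe
        simp only [Finset.mem_filter, Finset.mem_univ, true_and] at hv
        exact hprim c (by omega) (hv ▸ cdes_lt m k hm v)
      have hz : S * (1 - ζ ^ c) = 0 := by
        rw [mul_sub, mul_one, mul_comm S (ζ^c), ← hrot, sub_self]
      rcases mul_eq_zero.1 hz with h | h
      · exact h
      · exact absurd (by linear_combination -h : ζ ^ c = 1) hne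
    · rw [hS, Finset.not_nonempty_iff_eq_empty.1 hfe, Finset.sum_empty]
  -- total: only c = 0 contributes
  rw [Finset.sum_eq_single_of_mem 0 (Finset.mem_range.2 hm)
    (fun c hc hc0 => hfib c hc hc0)]
  -- fiber at 0 : constant words
  have hconstmaj : ∀ v ∈ Finset.univ.filter (fun v => cdesW m k v = 0),
      ζ ^ (majW m k v) = 1 := by
    intro v hv
    simp only [Finset.mem_filter, Finset.mem_univ, true_and] at hv
    rw [maj_const m k hm v (const_of_cdes_zero m k hm v hv), pow_zero]
  rw [Finset.sum_congr rfl hconstmaj, Finset.sum_const, nsmul_eq_mul, mul_one]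
  have hcard : (Finset.univ.filter (fun v => cdesW m k v = 0)).card
      = (Finset.univ : Finset (Fin k)).card := by
    apply Finset.card_nbij' (i := fun v => v ⟨0, hm⟩) (j := fun a _ => a)
    · intro v _; exact Finset.mem_univ _
    · intro a _
      simp only [Finset.mem_coe, Finset.mem_filter, Finset.mem_univ, true_and]
      apply Finset.sum_eq_zero
      intro i hi
      rw [cterm, dif_pos (Finset.mem_range.1 hi)]
      simp
    · intro v hv
      simp only [Finset.mem_coe, Finset.mem_filter, Finset.mem_univ, true_and] at hv
      funext i
      exact (const_of_cdes_zero m k hm v hv i).symm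
    · intro a _; rfl
  rw [hcard, Finset.card_univ, Fintype.card_fin]

lemma blk_lt {g m : ℕ} (j : Fin g) (r : Fin m) : (j : ℕ) * m + (r : ℕ) < g * m := by
  have h1 : (j : ℕ) + 1 ≤ g := j.isLt
  calc (j : ℕ) * m + (r : ℕ) < (j : ℕ) * m + m := by omega
    _ = ((j : ℕ) + 1) * m := by ring
    _ ≤ g * m := Nat.mul_le_mul_right m h1

def blockW (g m k : ℕ) (w : Fin (g * m) → Fin k) (j : Fin g) : Fin m → Fin k :=
  fun r => w ⟨(j : ℕ) * m + (r : ℕ), blk_lt j r⟩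

lemma mterm_block_mod (g m k : ℕ) (hm : 0 < m) (w : Fin (g * m) → Fin k)
    (j : ℕ) (r : ℕ) (hj : j < g) (hr : r < m) :
    mterm (g * m) k w (j * m + r) % m = mterm m k (blockW g m k w ⟨j, hj⟩) r % m := by
  by_cases h1 : r + 1 < m
  · have h2 : j * m + r + 1 < g * m := by
      have : j * m + (r+1) < g * m := blk_lt (⟨j, hj⟩ : Fin g) (⟨r+1, h1⟩ : Fin m)
      omega
    rw [mterm_of_lt w h2, mterm_of_lt (blockW g m k w ⟨j, hj⟩) h1]
    simp only [blockW]
    have e1 : j * m + (r + 1) = j * m + r + 1 := by omega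
    simp only [e1]
    split
    · -- values (j*m+r+1) % m = (r+1) % m
      have : j * m + r + 1 = m * j + (r + 1) := by ring
      rw [this, Nat.mul_add_mod]
    · rfl
  · -- r = m - 1 : block term is 0 ; word term is 0 mod m
    rw [mterm_of_ge (blockW g m k w ⟨j, hj⟩) h1]
    by_cases h2 : j * m + r + 1 < g * m
    · rw [mterm_of_lt w h2]
      split
      · have : j * m + r + 1 = m * (j + 1) := by
          have : r = m - 1 := by omega
          subst this; ring_nf; omega
        rw [this, Nat.mul_mod_right]
        simp
      · rfl
    · rw [mterm_of_ge w h2]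

lemma maj_block_mod (g m k : ℕ) (hm : 0 < m) (w : Fin (g * m) → Fin k) :
    majW (g * m) k w % m = (∑ j : Fin g, majW m k (blockW g m k w j)) % m := by
  rw [majW_eq]
  have step1 : ∑ i ∈ Finset.range (g * m), mterm (g * m) k w i
      = ∑ p ∈ Finset.range g ×ˢ Finset.range m, mterm (g * m) k w (p.1 * m + p.2) := by
    apply Finset.sum_nbij' (i := fun i => (i / m, i % m)) (j := fun p => p.1 * m + p.2)
    · intro a ha
      simp only [Finset.mem_range, Finset.mem_product] at ha ⊢
      refine ⟨Nat.div_lt_of_lt_mul ?_, Nat.mod_lt _ hm⟩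
      rw [mul_comm]; exact ha
    · intro p hp
      simp only [Finset.mem_range, Finset.mem_product] at hp ⊢
      exact blk_lt (⟨p.1, hp.1⟩ : Fin g) (⟨p.2, hp.2⟩ : Fin m)
    · intro a _
      show a / m * m + a % m = a
      rw [mul_comm]; exact Nat.div_add_mod a m
    · intro p hp
      simp only [Finset.mem_range, Finset.mem_product] at hp
      have e1 : p.1 * m + p.2 = m * p.1 + p.2 := by ring
      rw [e1, Nat.mul_add_div hm, Nat.mul_add_mod, Nat.div_eq_of_lt hp.2,
        Nat.mod_eq_of_lt hp.2, add_zero]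
    · intro a _
      congr 1
      rw [mul_comm, Nat.div_add_mod]
  rw [step1, Finset.sum_product]
  set F : ℕ → ℕ := fun j =>
    if h : j < g then majW m k (blockW g m k w ⟨j, h⟩) else 0 with hF
  have hR : ∑ j : Fin g, majW m k (blockW g m k w j) = ∑ j ∈ Finset.range g, F j := by
    rw [← Fin.sum_univ_eq_sum_range F g]
    apply Finset.sum_congr rfl
    intro j _
    rw [hF]
    simp only [dif_pos j.isLt]
  rw [hR, Finset.sum_nat_mod]
  conv_rhs => rw [Finset.sum_nat_mod]
  congr 1
  apply Finset.sum_congr rfl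
  intro j hj
  simp only [Finset.mem_range] at hj
  rw [hF]
  simp only [dif_pos hj]
  rw [majW_eq, Finset.sum_nat_mod]
  conv_rhs => rw [Finset.sum_nat_mod]
  congr 1
  apply Finset.sum_congr rfl
  intro r hr
  simp only [Finset.mem_range] at hr
  exact mterm_block_mod g m k hm w j r hj hr

def psiW (g m k : ℕ) (hm : 0 < m) (u : Fin g → Fin m → Fin k) : Fin (g * m) → Fin k :=
  fun i => u ⟨(i : ℕ) / m, Nat.div_lt_of_lt_mul (lt_of_lt_of_eq i.isLt (mul_comm g m))⟩
            ⟨(i : ℕ) % m, Nat.mod_lt _ hm⟩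

lemma block_psi (g m k : ℕ) (hm : 0 < m) (u : Fin g → Fin m → Fin k) (j : Fin g) :
    blockW g m k (psiW g m k hm u) j = u j := by
  funext r
  simp only [blockW, psiW]
  have e1 : ((j : ℕ) * m + (r : ℕ)) = m * (j : ℕ) + (r : ℕ) := by ring
  congr 1 <;> apply Fin.ext <;> simp only [] <;> rw [e1]
  · rw [Nat.mul_add_div hm, Nat.div_eq_of_lt r.isLt, add_zero]
  · rw [Nat.mul_add_mod, Nat.mod_eq_of_lt r.isLt]

lemma psi_bij (g m k : ℕ) (hm : 0 < m) : Function.Bijective (psiW g m k hm) := by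
  apply Function.bijective_iff_has_inverse.2
  refine ⟨fun w => blockW g m k w, ?_, ?_⟩
  · intro u; funext j; exact block_psi g m k hm u j
  · intro w
    funext i
    simp only [psiW, blockW]
    congr 1
    apply Fin.ext
    simp only []
    rw [mul_comm]
    exact Nat.div_add_mod (i : ℕ) m

lemma partB (n g m k : ℕ) (hn : n = g * m) (hm : 0 < m) (ζ : ℂ) (hζ : ζ ^ m = 1) :
    ∑ w : Fin n → Fin k, ζ ^ majW n k w
      = (∑ v : Fin m → Fin k, ζ ^ majW m k v) ^ g := by
  subst hn
  have hterm : ∀ w : Fin (g * m) → Fin k,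
      ζ ^ majW (g * m) k w = ∏ j : Fin g, ζ ^ majW m k (blockW g m k w j) := by
    intro w
    rw [Finset.prod_pow_eq_pow_sum]
    exact zeta_pow_eq ζ m hζ _ _ (maj_block_mod g m k hm w)
  rw [Finset.sum_congr rfl (fun w _ => hterm w), Fintype.sum_pow]
  exact (Fintype.sum_bijective (psiW g m k hm) (psi_bij g m k hm)
    (fun u => ∏ j : Fin g, ζ ^ majW m k (u j))
    (fun w => ∏ j : Fin g, ζ ^ majW m k (blockW g m k w j))
    (fun u => by
      show (∏ j : Fin g, ζ ^ majW m k (u j))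
        = ∏ j : Fin g, ζ ^ majW m k (blockW g m k (psiW g m k hm u) j)
      exact Finset.prod_congr rfl (fun j _ => by rw [block_psi g m k hm u j]))).symm

lemma bezout_nat (n d : ℕ) (hn : 0 < n) : ∃ t : ℕ, (t * d) % n = (Nat.gcd n d) % n := by
  have hb := Nat.gcd_eq_gcd_ab n d
  set b := Nat.gcdB n d with hbdef
  have hnz : (n : ℤ) ≠ 0 := by exact_mod_cast hn.ne'
  refine ⟨(b % (n : ℤ)).toNat, ?_⟩
  have hb0 : 0 ≤ b % (n : ℤ) := Int.emod_nonneg b hnz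
  have hcast : (((b % (n : ℤ)).toNat : ℤ)) = b % (n : ℤ) := Int.toNat_of_nonneg hb0
  have key : (((b % (n:ℤ)).toNat * d : ℕ) : ℤ) % (n:ℤ) = ((Nat.gcd n d : ℕ) : ℤ) % (n:ℤ) := by
    push_cast [hcast]
    rw [hb, add_comm, Int.add_mul_emod_self_left]
    have h2 : (b % (n:ℤ) * (d:ℤ)) % (n:ℤ) = (b * (d:ℤ)) % (n:ℤ) := by
      conv_rhs => rw [Int.mul_emod]
      conv_lhs => rw [Int.mul_emod]
      rw [Int.emod_emod_of_dvd b dvd_rfl]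
    rw [h2, mul_comm]
  exact_mod_cast key

lemma partA (n k d : ℕ) (hn : 0 < n) :
    Fintype.card {w : Fin n → Fin k //
        ∀ i : Fin n, w ⟨((i : ℕ) + d) % n, Nat.mod_lt _ hn⟩ = w i}
      = k ^ (Nat.gcd n d) := by
  classical
  set g := Nat.gcd n d with hg
  have hgpos : 0 < g := Nat.gcd_pos_of_pos_left d hn
  have hgn : g ∣ n := Nat.gcd_dvd_left n d
  have hgd : g ∣ d := Nat.gcd_dvd_right n d
  have hgle : g ≤ n := Nat.le_of_dvd hn hgn
  -- fixed words are determined by residue mod g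
  have step1 : ∀ (w : Fin n → Fin k),
      (∀ i : Fin n, w ⟨((i : ℕ) + d) % n, Nat.mod_lt _ hn⟩ = w i) →
      ∀ (t : ℕ) (i : Fin n), w ⟨((i : ℕ) + t * d) % n, Nat.mod_lt _ hn⟩ = w i := by
    intro w hw t
    induction t with
    | zero =>
        intro i
        congr 1
        exact Fin.ext (by simp [Nat.mod_eq_of_lt i.isLt])
    | succ t ih =>
        intro i
        have e1 : ((i : ℕ) + (t + 1) * d) % n = ((((i : ℕ) + t * d) % n) + d) % n := by
          rw [Nat.mod_add_mod]; ring_nf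
        have := hw ⟨((i : ℕ) + t * d) % n, Nat.mod_lt _ hn⟩
        rw [← ih i]
        rw [← this]
        congr 1
        exact Fin.ext e1
  have step2 : ∀ (w : Fin n → Fin k),
      (∀ i : Fin n, w ⟨((i : ℕ) + d) % n, Nat.mod_lt _ hn⟩ = w i) →
      ∀ (s : ℕ) (i : Fin n), w ⟨((i : ℕ) + s * g) % n, Nat.mod_lt _ hn⟩ = w i := by
    intro w hw
    obtain ⟨t, ht⟩ := bezout_nat n d hn
    have single : ∀ i : Fin n, w ⟨((i : ℕ) + g) % n, Nat.mod_lt _ hn⟩ = w i := by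
      intro i
      rw [← hg] at ht
      have := step1 w hw t i
      rw [← this]
      congr 1
      apply Fin.ext
      show ((i : ℕ) + g) % n = ((i : ℕ) + t * d) % n
      rw [Nat.add_mod (i:ℕ) g, ← ht, ← Nat.add_mod]
    intro s
    induction s with
    | zero =>
        intro i
        congr 1
        exact Fin.ext (by simp [Nat.mod_eq_of_lt i.isLt])
    | succ s ih =>
        intro i
        have e1 : ((i : ℕ) + (s + 1) * g) % n = ((((i : ℕ) + s * g) % n) + g) % n := by
          rw [Nat.mod_add_mod]; ring_nf
        have := single ⟨((i : ℕ) + s * g) % n, Nat.mod_lt _ hn⟩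
        rw [← ih i, ← this]
        congr 1
        exact Fin.ext e1
  have core : ∀ (w : Fin n → Fin k),
      (∀ i : Fin n, w ⟨((i : ℕ) + d) % n, Nat.mod_lt _ hn⟩ = w i) →
      ∀ i : Fin n, w i = w ⟨(i : ℕ) % g, by have := Nat.mod_lt (i:ℕ) hgpos; omega⟩ := by
    intro w hw i
    have := step2 w hw ((i : ℕ) / g) ⟨(i : ℕ) % g, by have := Nat.mod_lt (i:ℕ) hgpos; omega⟩
    rw [← this]
    congr 1
    apply Fin.ext
    show (i : ℕ) = ((i : ℕ) % g + (i : ℕ) / g * g) % n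
    rw [Nat.mod_add_div', Nat.mod_eq_of_lt i.isLt]
  -- build equivalence with Fin g → Fin k
  have e : {w : Fin n → Fin k //
      ∀ i : Fin n, w ⟨((i : ℕ) + d) % n, Nat.mod_lt _ hn⟩ = w i} ≃ (Fin g → Fin k) := by
    refine ⟨fun w j => w.1 ⟨(j : ℕ), by omega⟩,
      fun v => ⟨fun i => v ⟨(i : ℕ) % g, Nat.mod_lt _ hgpos⟩, ?_⟩, ?_, ?_⟩
    · intro i
      have hd0 : d % g = 0 := Nat.mod_eq_zero_of_dvd hgd
      have hv : (((i : ℕ) + d) % n) % g = (i : ℕ) % g := by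
        rw [Nat.mod_mod_of_dvd _ hgn, Nat.add_mod, hd0, add_zero,
          Nat.mod_mod_of_dvd _ dvd_rfl]
      show v ⟨(((i : ℕ) + d) % n) % g, _⟩ = v ⟨(i : ℕ) % g, _⟩
      congr 1
      exact Fin.ext hv
    · intro w
      apply Subtype.ext
      funext i
      exact (core w.1 w.2 i).symm
    · intro v
      funext j
      simp only []
      congr 1
      exact Fin.ext (Nat.mod_eq_of_lt j.isLt)
  rw [Fintype.card_congr e, Fintype.card_fun, Fintype.card_fin, Fintype.card_fin]

/-- Cyclic sieving on words: the number of words of length `n` over `[k]`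
fixed by `d`-fold cyclic rotation equals `f_n(ξ^d)`, where
`f_n(q) = Σ_w q^(maj w)` and `ξ = e^(2πi/n)`. -/
theorem stmt5 (n k d : ℕ) (hn : 0 < n) :
    (Fintype.card {w : Fin n → Fin k //
        ∀ i : Fin n, w ⟨((i : ℕ) + d) % n, Nat.mod_lt _ hn⟩ = w i} : ℂ)
      = ∑ w : Fin n → Fin k,
          (Complex.exp (2 * Real.pi * Complex.I / n)) ^ (d * majW n k w) := by
  classical
  set g := Nat.gcd n d with hg
  have hgpos : 0 < g := Nat.gcd_pos_of_pos_left d hn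
  have hgn : g ∣ n := Nat.gcd_dvd_left n d
  have hgd : g ∣ d := Nat.gcd_dvd_right n d
  set m := n / g with hm
  have hnm : n = g * m := (Nat.mul_div_cancel' hgn).symm
  have hmpos : 0 < m := by
    rcases Nat.eq_zero_or_pos m with h | h
    · rw [h, mul_zero] at hnm; omega
    · exact h
  set ξ : ℂ := Complex.exp (2 * Real.pi * Complex.I / n) with hξ
  set ζ : ℂ := ξ ^ d with hζ
  have hnC : (n : ℂ) ≠ 0 := by exact_mod_cast hn.ne'
  have hξn : ξ ^ n = 1 := by
    rw [hξ, ← Complex.exp_nat_mul]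
    rw [show (n : ℂ) * (2 * Real.pi * Complex.I / n) = 2 * Real.pi * Complex.I by
      field_simp]
    exact Complex.exp_two_pi_mul_I
  have hζm : ζ ^ m = 1 := by
    obtain ⟨d', hd'⟩ := hgd
    rw [hζ, ← pow_mul]
    have : d * m = d' * n := by rw [hd', hnm]; ring
    rw [this, mul_comm, pow_mul, hξn, one_pow]
  have hprim : ∀ c : ℕ, 0 < c → c < m → ζ ^ c ≠ 1 := by
    intro c hc0 hcm h1
    rw [hζ, ← pow_mul, hξ, ← Complex.exp_nat_mul] at h1
    obtain ⟨j, hj⟩ := Complex.exp_eq_one_iff.1 h1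
    have hπ : (2 * (Real.pi : ℂ) * Complex.I) ≠ 0 := by
      simp [Real.pi_ne_zero, Complex.I_ne_zero]
    have h2 : ((d * c : ℕ) : ℂ) = (j : ℂ) * n := by
      apply mul_right_cancel₀ hπ
      have e : ((d * c : ℕ) : ℂ) * (2 * (Real.pi : ℂ) * Complex.I)
          = ((d * c : ℕ) : ℂ) * (2 * (Real.pi : ℂ) * Complex.I / n) * n := by
        field_simp
      rw [e, hj]; ring
    have h3 : (d * c : ℤ) = j * n := by exact_mod_cast h2
    have h4 : (n : ℤ) ∣ (d * c : ℕ) := ⟨j, by push_cast; rw [h3]; ring⟩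
    have h5 : n ∣ d * c := by exact_mod_cast h4
    -- n = g*m, d = g*d', gcd(m, d') = 1
    obtain ⟨d', hd'⟩ := hgd
    have h6 : m ∣ d' * c := by
      have : g * m ∣ g * (d' * c) := by
        rw [← hnm]; rw [hd'] at h5; rw [show g * (d' * c) = g * d' * c by ring]; exact h5
      exact (mul_dvd_mul_iff_left (by omega : g ≠ 0)).1 this
    have h7 : Nat.Coprime m d' := by
      have := Nat.coprime_div_gcd_div_gcd (m := n) (n := d) hgpos
      have e1 : n / g = m := rfl
      have e2 : d / g = d' := by rw [hd']; exact Nat.mul_div_cancel_left d' hgpos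
      rw [e1, e2] at this
      exact this
    have h8 : m ∣ c := (Nat.Coprime.dvd_of_dvd_mul_left h7) h6
    have := Nat.le_of_dvd hc0 h8
    omega
  calc (Fintype.card {w : Fin n → Fin k //
        ∀ i : Fin n, w ⟨((i : ℕ) + d) % n, Nat.mod_lt _ hn⟩ = w i} : ℂ)
      = ((k ^ g : ℕ) : ℂ) := by rw [partA n k d hn]
    _ = ((k : ℂ)) ^ g := by push_cast; ring
    _ = (∑ v : Fin m → Fin k, ζ ^ majW m k v) ^ g := by rw [partC m k hmpos ζ hζm hprim]
    _ = ∑ w : Fin n → Fin k, ζ ^ majW n k w := (partB n g m k hnm hmpos ζ hζm).symm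
    _ = ∑ w : Fin n → Fin k, ξ ^ (d * majW n k w) := by
        apply Finset.sum_congr rfl
        intro w _
        rw [hζ, ← pow_mul]
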